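/- arXiv:1207.5482 — 4 statements merged into one kernel-verified Lean document; each statement's English description precedes it below -/
import Mathlib

section
/- Let Q : ℝ → ℝ be twice continuously differentiable and periodic with period ρ > 0, and let D > 0. Let g : ℝ → ℝ be continuous and ρ-periodic with ∫₀^ρ g(z) e^{−Q(z)/D} dz = 0. Then there exists a twice continuously differentiable ρ-periodic function Ξ : ℝ → ℝ such that D Ξ''(y) − Q'(y) Ξ'(y) = −g(y) for all y ∈ ℝ. -/
/-- One-dimensional Fredholm-alternative solvability of the auxiliary Poisson
equation: if `g` is continuous, `ρ`-periodic and centered with respect to the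
Gibbs measure `e^{-Q/D} dy`, then there is a `C²` `ρ`-periodic `Ξ` with
`D Ξ''(y) - Q'(y) Ξ'(y) = -g(y)` for all `y`. -/
theorem poisson_equation_solvable
    (Q : ℝ → ℝ) (ρ D : ℝ) (hQ : ContDiff ℝ 2 Q) (hQper : Function.Periodic Q ρ)
    (hρ : 0 < ρ) (hD : 0 < D)
    (g : ℝ → ℝ) (hg : Continuous g) (hgper : Function.Periodic g ρ)
    (hcentered : ∫ z in (0:ℝ)..ρ, g z * Real.exp (-Q z / D) = 0) :
    ∃ Ξ : ℝ → ℝ, ContDiff ℝ 2 Ξ ∧ Function.Periodic Ξ ρ ∧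
      ∀ y : ℝ, D * deriv (deriv Ξ) y - deriv Q y * deriv Ξ y = -g y := by
  have hDne : D ≠ 0 := hD.ne'
  set w : ℝ → ℝ := fun z => Real.exp (-Q z / D) with hw
  have hwc : Continuous w := Real.continuous_exp.comp ((hQ.continuous.neg).div_const D)
  have hcentered' : (∫ z in (0:ℝ)..ρ, g z * w z) = 0 := by
    simpa only [hw] using hcentered
  have hgwc : Continuous (fun z => g z * w z) := hg.mul hwc
  have hgwper : Function.Periodic (fun z => g z * w z) ρ := fun x => by
    simp [hw, hgper x, hQper x]
  set W : ℝ → ℝ := fun y => ∫ z in (0:ℝ)..y, g z * w z with hWdef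
  have hWd : ∀ y, HasDerivAt W (g y * w y) y := fun y =>
    intervalIntegral.integral_hasDerivAt_right (hgwc.intervalIntegrable 0 y)
      (hgwc.stronglyMeasurableAtFilter _ _) hgwc.continuousAt
  have hWc : Continuous W := by
    rw [continuous_iff_continuousAt]
    exact fun y => (hWd y).continuousAt
  have hWper : Function.Periodic W ρ := by
    intro x
    have h1 : W (x + ρ) = W x + ∫ z in x..(x + ρ), g z * w z :=
      (intervalIntegral.integral_add_adjacent_intervals
        (hgwc.intervalIntegrable 0 x) (hgwc.intervalIntegrable x (x + ρ))).symm
    rw [h1, hgwper.intervalIntegral_add_eq x 0, zero_add, hcentered', add_zero]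
  set E : ℝ → ℝ := fun y => Real.exp (Q y / D) with hE
  have hEc : Continuous E := Real.continuous_exp.comp (hQ.continuous.div_const D)
  have hI : 0 < ∫ z in (0:ℝ)..ρ, E z :=
    intervalIntegral.intervalIntegral_pos_of_pos (hEc.intervalIntegrable 0 ρ)
      (fun x => Real.exp_pos _) hρ
  set C : ℝ := (∫ z in (0:ℝ)..ρ, E z * (W z / D)) / (∫ z in (0:ℝ)..ρ, E z) with hC
  set φ : ℝ → ℝ := fun y => E y * (C - W y / D) with hφ
  have hφc : Continuous φ := hEc.mul (continuous_const.sub (hWc.div_const D))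
  have hQd : ∀ y, HasDerivAt Q (deriv Q y) y := fun y =>
    ((hQ.differentiable two_ne_zero) y).hasDerivAt
  have hEd : ∀ y, HasDerivAt E (E y * (deriv Q y / D)) y := fun y =>
    ((hQd y).div_const D).exp
  have hφd : ∀ y, HasDerivAt φ (deriv Q y / D * φ y - g y / D) y := fun y => by
    have h1 : HasDerivAt (fun t => C - W t / D) (-(g y * w y / D)) y :=
      ((hWd y).div_const D).const_sub C
    have h2 : HasDerivAt φ (E y * (deriv Q y / D) * (C - W y / D) + E y * -(g y * w y / D)) y :=
      (hEd y).mul h1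
    have hEw : E y * w y = 1 := by
      simp only [hE, hw, ← Real.exp_add]
      rw [show Q y / D + -Q y / D = 0 by ring, Real.exp_zero]
    convert h2 using 1
    simp only [hφ]
    linear_combination (g y / D) * hEw
  have hφper : Function.Periodic φ ρ := fun x => by
    simp only [hφ, hE, hQper x, hWper x]
  set Ξ : ℝ → ℝ := fun y => ∫ t in (0:ℝ)..y, φ t with hΞdef
  have hΞd : ∀ y, HasDerivAt Ξ (φ y) y := fun y =>
    intervalIntegral.integral_hasDerivAt_right (hφc.intervalIntegrable 0 y)
      (hφc.stronglyMeasurableAtFilter _ _) hφc.continuousAt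
  have hΞderiv : deriv Ξ = φ := funext fun y => (hΞd y).deriv
  have hIφ : (∫ z in (0:ℝ)..ρ, φ z) = 0 := by
    have hsplit : (∫ z in (0:ℝ)..ρ, φ z)
        = C * (∫ z in (0:ℝ)..ρ, E z) - ∫ z in (0:ℝ)..ρ, E z * (W z / D) := by
      rw [← intervalIntegral.integral_const_mul, ← intervalIntegral.integral_sub (f := fun x => C * E x) (g := fun z => E z * (W z / D))
        ((continuous_const.mul hEc : Continuous fun x => C * E x).intervalIntegrable 0 ρ)
        ((hEc.mul (hWc.div_const D) : Continuous fun z => E z * (W z / D)).intervalIntegrable 0 ρ)]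
      apply intervalIntegral.integral_congr
      intro z _
      simp only [hφ]
      ring
    rw [hsplit, hC, div_mul_cancel₀ _ hI.ne', sub_self]
  have hΞper : Function.Periodic Ξ ρ := by
    intro x
    have h1 : Ξ (x + ρ) = Ξ x + ∫ z in x..(x + ρ), φ z :=
      (intervalIntegral.integral_add_adjacent_intervals
        (hφc.intervalIntegrable 0 x) (hφc.intervalIntegrable x (x + ρ))).symm
    rw [h1, hφper.intervalIntegral_add_eq x 0, zero_add, hIφ, add_zero]
  have hΞdiff : Differentiable ℝ Ξ := fun y => (hΞd y).differentiableAt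
  have hφdiff : Differentiable ℝ φ := fun y => (hφd y).differentiableAt
  have hφderiv : deriv φ = fun y => deriv Q y / D * φ y - g y / D :=
    funext fun y => (hφd y).deriv
  have hQ'c : Continuous (deriv Q) := hQ.continuous_deriv one_le_two
  have hφC1 : ContDiff ℝ 1 φ := contDiff_one_iff_deriv.mpr ⟨hφdiff, by
    rw [hφderiv]; exact ((hQ'c.div_const D).mul hφc).sub (hg.div_const D)⟩
  have hΞC2 : ContDiff ℝ 2 Ξ := by
    have h : ContDiff ℝ ((1 : WithTop ℕ∞) + 1) Ξ :=
      (contDiff_succ_iff_deriv (n := 1)).mpr ⟨hΞdiff, by simp, by rw [hΞderiv]; exact hφC1⟩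
    exact_mod_cast h
  refine ⟨Ξ, hΞC2, hΞper, fun y => ?_⟩
  rw [hΞderiv, hφderiv]
  field_simp
  ring
end

section
/- Let g : ℝ → ℝ be continuously differentiable, let T > 0, and let x : [0, T] → ℝ solve x'(t) = g(x(t)) with g(x(t)) ≠ 0 for all t ∈ [0, T]. Let Φ solve Φ'(t) = g'(x(t)) Φ(t), Φ(0) = 1. Then (Φ(T) / g(x(T)))² · ∫₀^T Φ(s)^{−2} ds = ∫_{x(0)}^{x(T)} dy / g(y)³. In particular, taking g(x) = V'(x)/C and multiplying by the diffusion coefficient σ̄² = 2D/C with C = ⟨e^{−Q/D}⟩⟨e^{Q/D}⟩ yields the limiting variance 2D C² ∫_{x(0)}^{x(T)} dz / (V'(z))³ of Theorem 5.3. -/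
/-- The deterministic integral identity behind the limiting variance of
Theorem 5.3: with `x' = g(x)`, `g(x(t)) ≠ 0` on `[0,T]`, and `Φ` the solution of
the variational equation `Φ' = g'(x(t)) Φ`, `Φ(0) = 1`, one has
`(Φ(T)/g(x(T)))² ∫₀^T Φ(s)⁻² ds = ∫_{x(0)}^{x(T)} dy / g(y)³`. In particular,
for `g = V'/C` multiplying by `σ̄² = 2D/C` yields
`2 D C² ∫_{x(0)}^{x(T)} dz/(V'(z))³`. -/
theorem limiting_variance_integral_identity
    (g : ℝ → ℝ) (hg : ContDiff ℝ 1 g) (T : ℝ) (hT : 0 < T)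
    (x : ℝ → ℝ) (hx : ∀ t ∈ Set.Icc (0:ℝ) T, HasDerivAt x (g (x t)) t)
    (hne : ∀ t ∈ Set.Icc (0:ℝ) T, g (x t) ≠ 0)
    (Φ : ℝ → ℝ) (hΦ0 : Φ 0 = 1)
    (hΦ : ∀ t ∈ Set.Icc (0:ℝ) T, HasDerivAt Φ (deriv g (x t) * Φ t) t) :
    ((Φ T / g (x T)) ^ 2 * ∫ s in (0:ℝ)..T, ((Φ s) ^ 2)⁻¹
        = ∫ y in (x 0)..(x T), 1 / (g y) ^ 3) ∧
      ∀ (V : ℝ → ℝ) (D C : ℝ), 0 < C → (∀ w, g w = deriv V w / C) →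
        (2 * D / C) * ((Φ T / g (x T)) ^ 2 * ∫ s in (0:ℝ)..T, ((Φ s) ^ 2)⁻¹)
          = 2 * D * C ^ 2 * ∫ z in (x 0)..(x T), 1 / (deriv V z) ^ 3 := by
  have hgdiff : Differentiable ℝ g := hg.differentiable one_ne_zero
  have h0T : (0:ℝ) ∈ Set.Icc (0:ℝ) T := ⟨le_rfl, hT.le⟩
  have hTT : T ∈ Set.Icc (0:ℝ) T := ⟨hT.le, le_rfl⟩
  -- derivative of g ∘ x
  have hgx : ∀ t ∈ Set.Icc (0:ℝ) T,
      HasDerivAt (fun t => g (x t)) (deriv g (x t) * g (x t)) t := by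
    intro t ht
    exact ((hgdiff (x t)).hasDerivAt.comp t (hx t ht))
  -- ratio Φ / (g ∘ x) has derivative zero
  have hr : ∀ t ∈ Set.Icc (0:ℝ) T,
      HasDerivAt (fun t => Φ t / g (x t)) 0 t := by
    intro t ht
    have h := (hΦ t ht).div (hgx t ht) (hne t ht)
    have : (deriv g (x t) * Φ t * g (x t) - Φ t * (deriv g (x t) * g (x t)))
        / (g (x t)) ^ 2 = 0 := by ring
    rwa [this] at h
  -- hence constant on [0,T]
  have hconst : ∀ t ∈ Set.Icc (0:ℝ) T, Φ t / g (x t) = 1 / g (x 0) := by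
    have hcont : ContinuousOn (fun t => Φ t / g (x t)) (Set.Icc 0 T) :=
      fun t ht => ((hr t ht).continuousAt).continuousWithinAt
    have := constant_of_has_deriv_right_zero hcont
      (fun t ht => ((hr t (Set.Ico_subset_Icc_self ht)).hasDerivWithinAt))
    intro t ht
    simpa [hΦ0] using this t ht
  have hΦeq : ∀ t ∈ Set.Icc (0:ℝ) T, Φ t = g (x t) / g (x 0) := by
    intro t ht
    have h := hconst t ht
    rw [div_eq_div_iff (hne t ht) (hne 0 h0T)] at h
    rw [eq_div_iff (hne 0 h0T)]
    linarith
  -- continuity facts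
  have hxc : ContinuousOn x (Set.Icc 0 T) :=
    fun t ht => ((hx t ht).continuousAt).continuousWithinAt
  have hId : Set.uIcc (0:ℝ) T = Set.Icc 0 T := Set.uIcc_of_le hT.le
  -- change of variables
  have hcov : (∫ s in (0:ℝ)..T, (g (x s)) • ((fun y => 1 / (g y) ^ 3) ∘ x) s)
      = ∫ y in (x 0)..(x T), 1 / (g y) ^ 3 := by
    apply intervalIntegral.integral_comp_smul_deriv''
    · rwa [hId]
    · intro t ht
      rw [min_eq_left hT.le, max_eq_right hT.le] at ht
      exact (hx t (Set.Ioo_subset_Icc_self ht)).hasDerivWithinAt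
    · rw [hId]
      exact hgdiff.continuous.comp_continuousOn hxc
    · rw [hId]
      intro y hy
      obtain ⟨t, ht, rfl⟩ := hy
      have hgy : g (x t) ≠ 0 := hne t ht
      apply ContinuousWithinAt.div continuousWithinAt_const
      · exact ((hgdiff.continuous.pow 3).continuousAt).continuousWithinAt
      · exact pow_ne_zero 3 hgy
  -- main identity
  have key : (Φ T / g (x T)) ^ 2 * ∫ s in (0:ℝ)..T, ((Φ s) ^ 2)⁻¹
      = ∫ y in (x 0)..(x T), 1 / (g y) ^ 3 := by
    rw [← hcov, hconst T hTT]
    rw [intervalIntegral.integral_congr (g := fun s => (g (x 0)) ^ 2 • (g (x s)) • ((fun y => 1 / (g y) ^ 3) ∘ x) s) ?_]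
    · rw [intervalIntegral.integral_smul]
      have hg0 : g (x 0) ≠ 0 := hne 0 h0T
      field_simp
      rfl
    · intro s hs
      rw [hId] at hs
      have h1 := hΦeq s hs
      have hg0 : g (x 0) ≠ 0 := hne 0 h0T
      have hgs : g (x s) ≠ 0 := hne s hs
      show ((Φ s) ^ 2)⁻¹ = (g (x 0)) ^ 2 • (g (x s)) • (1 / (g (x s)) ^ 3)
      rw [h1]
      simp only [smul_eq_mul]
      field_simp
  refine ⟨key, ?_⟩
  intro V D C hC hV
  rw [key]
  have hint : (∫ y in (x 0)..(x T), 1 / (g y) ^ 3)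
      = C ^ 3 * ∫ z in (x 0)..(x T), 1 / (deriv V z) ^ 3 := by
    rw [← intervalIntegral.integral_const_mul]
    apply intervalIntegral.integral_congr
    intro y _
    show 1 / (g y) ^ 3 = C ^ 3 * (1 / (deriv V y) ^ 3)
    rw [hV y]
    rcases eq_or_ne (deriv V y) 0 with h | h
    · simp [h]
    · field_simp
  rw [hint]
  have : C ≠ 0 := hC.ne'
  field_simp
end

section
/- Let S > 0, 0 < T < S, v > 0, and for each ε > 0 let h^ε : [0, S] → ℝ be continuous, with h^ε converging uniformly on [0, S] as ε → 0⁺ to a continuous function h. Define γ^ε(t) = (t − T) v + ε h^ε(t) and τ^ε = inf { t ∈ [0, S] : γ^ε(t) ≥ 0 }. Then for all sufficiently small ε > 0 the set defining τ^ε is nonempty, and lim_{ε → 0⁺} (τ^ε − T)/ε = −h(T)/v. -/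
open Filter Topology

set_option maxHeartbeats 1000000

/-- Deterministic skeleton of the exit-time correction (Theorems 4.1, 5.3): a curve
`γ^ε(t) = (t - T) v + ε h^ε(t)` crossing the level `0` transversally at time `T`
with speed `v > 0`, perturbed by fluctuations whose rescaled profiles `h^ε`
converge uniformly on `[0,S]` to `h`, has first crossing time
`τ^ε = inf { t ∈ [0,S] : γ^ε(t) ≥ 0 }` satisfying
`(τ^ε - T)/ε → -h(T)/v` as `ε → 0⁺`. -/
theorem exit_time_correction_skeleton
    (S T v : ℝ) (hS : 0 < S) (hT : 0 < T) (hTS : T < S) (hv : 0 < v)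
    (h : ℝ → ℝ → ℝ) (hcont : ∀ ε > (0:ℝ), ContinuousOn (h ε) (Set.Icc 0 S))
    (hlim : ℝ → ℝ) (hlimcont : ContinuousOn hlim (Set.Icc 0 S))
    (hunif : TendstoUniformlyOn h hlim (𝓝[>] (0:ℝ)) (Set.Icc 0 S))
    (τ : ℝ → ℝ)
    (hτ : ∀ ε > (0:ℝ),
      τ ε = sInf {t | t ∈ Set.Icc (0:ℝ) S ∧ 0 ≤ (t - T) * v + ε * h ε t}) :
    (∃ ε₀ > (0:ℝ), ∀ ε ∈ Set.Ioo (0:ℝ) ε₀,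
        {t | t ∈ Set.Icc (0:ℝ) S ∧ 0 ≤ (t - T) * v + ε * h ε t}.Nonempty) ∧
      Tendsto (fun ε => (τ ε - T) / ε) (𝓝[>] (0:ℝ)) (𝓝 (-hlim T / v)) := by
  obtain ⟨M0, hM0⟩ := isCompact_Icc.exists_bound_of_continuousOn hlimcont
  set M := max M0 0 with hMdef
  have hM : ∀ t ∈ Set.Icc (0:ℝ) S, |hlim t| ≤ M := fun t ht =>
    le_trans (hM0 t ht) (le_max_left _ _)
  have hMnn : (0:ℝ) ≤ M := le_max_right _ _
  have hTmem : T ∈ Set.Icc (0:ℝ) S := ⟨hT.le, hTS.le⟩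
  have hSmem : S ∈ Set.Icc (0:ℝ) S := ⟨hS.le, le_refl _⟩
  -- uniform closeness event
  have huev : ∀ c > (0:ℝ), ∀ᶠ ε in 𝓝[>] (0:ℝ),
      ∀ t ∈ Set.Icc (0:ℝ) S, |h ε t - hlim t| < c := by
    intro c hc
    filter_upwards [(Metric.tendstoUniformlyOn_iff.mp hunif) c hc] with ε hε t ht
    have := hε t ht
    rwa [Real.dist_eq, abs_sub_comm] at this
  constructor
  · -- nonemptiness
    obtain ⟨a, ha, haI⟩ :=
      mem_nhdsGT_iff_exists_Ioo_subset.mp (huev 1 one_pos)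
    have hden : (0:ℝ) < (S - T) * v / (M + 1) := by
      apply div_pos (by nlinarith) (by linarith)
    refine ⟨min a ((S - T) * v / (M + 1)), lt_min ha hden, ?_⟩
    intro ε hε
    have hεa : ε ∈ Set.Ioo (0:ℝ) a :=
      ⟨hε.1, lt_of_lt_of_le hε.2 (min_le_left _ _)⟩
    have hεd : ε < (S - T) * v / (M + 1) :=
      lt_of_lt_of_le hε.2 (min_le_right _ _)
    have hclose := haI hεa S hSmem
    refine ⟨S, hSmem, ?_⟩
    have hbS : |hlim S| ≤ M := hM S hSmem
    have h1 : h ε S ≥ hlim S - 1 := by cases abs_lt.mp hclose; linarith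
    have h2 : hlim S ≥ -M := (abs_le.mp hbS).1
    have h3 : ε * (M + 1) < (S - T) * v := by
      rw [lt_div_iff₀ (by linarith : (0:ℝ) < M + 1)] at hεd
      linarith
    nlinarith [mul_le_mul_of_nonneg_left (show -(M+1) ≤ h ε S by linarith) hε.1.le]
  · -- the limit
    rw [Metric.tendsto_nhds]
    intro δ hδ
    set c := v * δ / 2 with hc
    have hcpos : 0 < c := by positivity
    -- continuity of hlim at T within Icc
    have hctT : ContinuousWithinAt hlim (Set.Icc 0 S) T := hlimcont T hTmem
    obtain ⟨δ₁, hδ₁pos, hδ₁⟩ :=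
      Metric.continuousWithinAt_iff.mp hctT (c / 4) (by positivity)
    set δ₀ := min δ₁ (min T (S - T)) with hδ₀def
    have hδ₀pos : 0 < δ₀ := lt_min hδ₁pos (lt_min hT (by linarith))
    have hδ₀T : δ₀ ≤ T := le_trans (min_le_right _ _) (min_le_left _ _)
    have hδ₀S : δ₀ ≤ S - T := le_trans (min_le_right _ _) (min_le_right _ _)
    have hδ₀1 : δ₀ ≤ δ₁ := min_le_left _ _
    have hBmem : Set.Ioo (0:ℝ) (δ₀ * v / (M + c)) ∈ 𝓝[>] (0:ℝ) :=
      Ioo_mem_nhdsGT_of_mem ⟨le_refl 0, by positivity⟩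
    have hbT : |hlim T| ≤ M := hM T hTmem
    filter_upwards [huev (c / 4) (by positivity), hBmem, self_mem_nhdsWithin]
      with ε hA hB hεpos
    have hεpos : (0:ℝ) < ε := hεpos
    have hεB : ε * (M + c) < δ₀ * v := by
      have := hB.2
      rw [lt_div_iff₀ (by positivity : (0:ℝ) < M + c)] at this
      linarith
    -- the candidate crossing point
    set q := (hlim T - c) / v with hqdef
    set r := (hlim T + c) / v with hrdef
    have hqv : q * v = hlim T - c := div_mul_cancel₀ _ hv.ne'
    have hrv : r * v = hlim T + c := div_mul_cancel₀ _ hv.ne'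
    have hqabs : |q| * v ≤ M + c := by
      rw [abs_div, abs_of_pos hv, div_mul_cancel₀ _ hv.ne']
      calc |hlim T - c| ≤ |hlim T| + |c| := abs_sub _ _
        _ ≤ M + c := by rw [abs_of_pos hcpos]; linarith
    have hrabs : |r| * v ≤ M + c := by
      rw [abs_div, abs_of_pos hv, div_mul_cancel₀ _ hv.ne']
      calc |hlim T + c| ≤ |hlim T| + |c| := abs_add_le _ _
        _ ≤ M + c := by rw [abs_of_pos hcpos]; linarith
    have hεq : ε * |q| < δ₀ := by nlinarith [abs_nonneg q]
    have hεr : ε * |r| < δ₀ := by nlinarith [abs_nonneg r]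
    have hεq' : |ε * q| < δ₀ := by
      rw [abs_mul, abs_of_pos hεpos]; exact hεq
    have hεr' : |ε * r| < δ₀ := by
      rw [abs_mul, abs_of_pos hεpos]; exact hεr
    set tstar := T - ε * q with htstar
    have htstarIcc : tstar ∈ Set.Icc (0:ℝ) S := by
      rcases abs_lt.mp hεq' with ⟨hq1, hq2⟩
      constructor <;> simp only [htstar] <;> linarith
    have htstardist : dist tstar T < δ₁ := by
      have hts : tstar - T = -(ε * q) := by rw [htstar]; ring
      rw [Real.dist_eq, hts, abs_neg]
      exact lt_of_lt_of_le hεq' hδ₀1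
    have hlimtstar : |hlim tstar - hlim T| < c / 4 := by
      have := hδ₁ htstarIcc htstardist
      rwa [Real.dist_eq] at this
    have hAtstar : |h ε tstar - hlim tstar| < c / 4 := hA tstar htstarIcc
    -- tstar belongs to the set
    have htstarmem : tstar ∈
        {t | t ∈ Set.Icc (0:ℝ) S ∧ 0 ≤ (t - T) * v + ε * h ε t} := by
      refine ⟨htstarIcc, ?_⟩
      have e1 : (tstar - T) * v = -(ε * (hlim T - c)) := by
        rw [htstar, ← hqv]; ring
      rcases abs_lt.mp hlimtstar with ⟨g1, g2⟩
      rcases abs_lt.mp hAtstar with ⟨f1, f2⟩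
      rw [e1]
      nlinarith [mul_lt_mul_of_pos_left (show hlim T - c < h ε tstar by linarith) hεpos,
        mul_pos hεpos hcpos]
    have hne : {t | t ∈ Set.Icc (0:ℝ) S ∧
        0 ≤ (t - T) * v + ε * h ε t}.Nonempty := ⟨tstar, htstarmem⟩
    have hbdd : BddBelow {t | t ∈ Set.Icc (0:ℝ) S ∧
        0 ≤ (t - T) * v + ε * h ε t} := ⟨0, fun t ht => ht.1.1⟩
    have hτε := hτ ε hεpos
    have hub : τ ε ≤ tstar := by rw [hτε]; exact csInf_le hbdd htstarmem
    have hlb : T - ε * r ≤ τ ε := by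
      rw [hτε]
      apply le_csInf hne
      intro t ht
      obtain ⟨⟨ht0, htS⟩, htγ⟩ := ht
      by_contra hcon
      push_neg at hcon
      have htlt : t - T < -(ε * r) := by linarith
      have hAt := hA t ⟨ht0, htS⟩
      rcases abs_lt.mp hAt with ⟨f1, f2⟩
      have hbt : |hlim t| ≤ M := hM t ⟨ht0, htS⟩
      rcases abs_le.mp hbt with ⟨b1, b2⟩
      -- t < T + δ₀
      have htub : t < T + δ₀ := by
        rcases abs_lt.mp hεr' with ⟨r1, r2⟩
        linarith
      rcases lt_or_ge (|t - T|) δ₀ with hcase | hcase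
      · -- near T : use continuity
        have hdist : dist t T < δ₁ := by
          rw [Real.dist_eq]; exact lt_of_lt_of_le hcase hδ₀1
        have := hδ₁ ⟨ht0, htS⟩ hdist
        rw [Real.dist_eq] at this
        rcases abs_lt.mp this with ⟨g1, g2⟩
        have e2 : (t - T) * v < -(ε * (hlim T + c)) := by
          have h' : (t - T) * v < -(ε * r) * v :=
            mul_lt_mul_of_pos_right htlt hv
          calc (t - T) * v < -(ε * r) * v := h'
            _ = -(ε * (hlim T + c)) := by rw [neg_mul, mul_assoc, hrv]
        nlinarith [mul_lt_mul_of_pos_left (show h ε t < hlim T + c / 2 by linarith) hεpos,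
          mul_pos hεpos hcpos]
      · -- far from T : t ≤ T - δ₀
        have htle : t ≤ T - δ₀ := by
          rcases le_abs.mp hcase with h' | h'
          · linarith
          · linarith
        have k1 : (t - T) * v ≤ -δ₀ * v :=
          mul_le_mul_of_nonneg_right (show t - T ≤ -δ₀ by linarith) hv.le
        have k2 : ε * h ε t < ε * (M + c) :=
          mul_lt_mul_of_pos_left (show h ε t < M + c by linarith) hεpos
        nlinarith
    -- conclude
    have hx_ub : (τ ε - T) / ε ≤ -q := by
      rw [div_le_iff₀ hεpos]
      have : tstar - T = -q * ε := by rw [htstar]; ring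
      linarith [hub, this]
    have hx_lb : -r ≤ (τ ε - T) / ε := by
      rw [le_div_iff₀ hεpos]
      have : -r * ε = -(ε * r) := by ring
      linarith
    have e1 : -q + hlim T / v = δ / 2 := by
      rw [hqdef, hc]; field_simp; ring
    have e2 : -r + hlim T / v = -(δ / 2) := by
      rw [hrdef, hc]; field_simp; ring
    rw [Real.dist_eq, neg_div, sub_neg_eq_add, abs_lt]
    constructor
    · linarith
    · linarith
end

section
/- Let Q : ℝ → ℝ be twice continuously differentiable and periodic with period ρ > 0, let D > 0, and set K = ∫₀^ρ e^{−Q(y)/D} dy, K̂ = ∫₀^ρ e^{Q(y)/D} dy. Let ξ : ℝ → ℝ be any twice continuously differentiable ρ-periodic function satisfying D ξ''(y) − Q'(y) ξ'(y) = (ρ/K̂) e^{Q(y)/D} − ρ²/(K K̂) for all y. Then ∫₀^ρ ξ'(y) K^{−1} e^{−Q(y)/D} dy = (ρ/(D K K̂)) ∫₀^ρ (1 − (ρ/K̂) e^{Q(y)/D}) ( ∫₀^y (1 − (ρ/K) e^{−Q(z)/D}) dz ) dy. Consequently, the averaged correction drift J̄₁(x) = −V'(x)² ∫₀^ρ ξ'(y)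 K^{−1} e^{−Q(y)/D} dy equals the explicit double-integral formula of Proposition 5.1: J̄₁(x) = −(ρ/(K K̂ D)) |V'(x)|² ∫₀^ρ [ (1 − (ρ/K̂) e^{Q(y)/D}) ∫₀^y (1 − (ρ/K) e^{−Q(z)/D}) dz ] dy. -/
/-- Explicit formula for the averaged correction drift `J̄₁` of Proposition 5.1:
if `ξ` is a `C²` `ρ`-periodic solution of
`D ξ'' - Q' ξ' = (ρ/K̂) e^{Q/D} - ρ²/(K K̂)`, then
`∫₀^ρ ξ'(y) K⁻¹ e^{-Q(y)/D} dy
  = (ρ/(D K K̂)) ∫₀^ρ (1 - (ρ/K̂) e^{Q(y)/D}) (∫₀^y (1 - (ρ/K) e^{-Q(z)/D}) dz) dy`,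
and consequently
`J̄₁(x) = -V'(x)² ∫₀^ρ ξ' K⁻¹ e^{-Q/D}
  = -(ρ/(K K̂ D)) |V'(x)|² ∫₀^ρ [(1 - (ρ/K̂) e^{Q(y)/D}) ∫₀^y (1 - (ρ/K) e^{-Q(z)/D}) dz] dy`. -/
theorem averaged_correction_drift_formula
    (Q : ℝ → ℝ) (ρ D : ℝ) (hQ : ContDiff ℝ 2 Q) (hQper : Function.Periodic Q ρ)
    (hρ : 0 < ρ) (hD : 0 < D)
    (K Khat : ℝ)
    (hK : K = ∫ y in (0:ℝ)..ρ, Real.exp (-Q y / D))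
    (hKhat : Khat = ∫ y in (0:ℝ)..ρ, Real.exp (Q y / D))
    (ξ : ℝ → ℝ) (hξ : ContDiff ℝ 2 ξ) (hξper : Function.Periodic ξ ρ)
    (hξeq : ∀ y : ℝ, D * deriv (deriv ξ) y - deriv Q y * deriv ξ y
      = (ρ / Khat) * Real.exp (Q y / D) - ρ ^ 2 / (K * Khat)) :
    (∫ y in (0:ℝ)..ρ, deriv ξ y * K⁻¹ * Real.exp (-Q y / D)
        = (ρ / (D * K * Khat)) *
          ∫ y in (0:ℝ)..ρ, (1 - (ρ / Khat) * Real.exp (Q y / D)) *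
            ∫ z in (0:ℝ)..y, (1 - (ρ / K) * Real.exp (-Q z / D))) ∧
      ∀ (V : ℝ → ℝ) (x : ℝ),
        -(deriv V x) ^ 2 * ∫ y in (0:ℝ)..ρ, deriv ξ y * K⁻¹ * Real.exp (-Q y / D)
          = -(ρ / (K * Khat * D)) * |deriv V x| ^ 2 *
            ∫ y in (0:ℝ)..ρ, (1 - (ρ / Khat) * Real.exp (Q y / D)) *
              ∫ z in (0:ℝ)..y, (1 - (ρ / K) * Real.exp (-Q z / D)) := by
  -- basic regularity facts
  rw [show (2:WithTop ℕ∞) = 1+1 from rfl, contDiff_succ_iff_deriv] at hQ hξ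
  have hQd : Differentiable ℝ Q := hQ.1
  have hξd : Differentiable ℝ ξ := hξ.1
  have hξ1 := hξ.2.2
  rw [contDiff_one_iff_deriv] at hξ1
  have hξ'd : Differentiable ℝ (deriv ξ) := hξ1.1
  have hξ'c : Continuous (deriv ξ) := hξ'd.continuous
  have hDne : D ≠ 0 := ne_of_gt hD
  -- positivity of K and Khat
  have hKpos : 0 < K := by
    rw [hK]
    exact intervalIntegral.intervalIntegral_pos_of_pos
      ((Real.continuous_exp.comp ((hQd.continuous.neg).div_const D)).intervalIntegrable 0 ρ)
      (fun x => Real.exp_pos _) hρ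
  have hKhatpos : 0 < Khat := by
    rw [hKhat]
    exact intervalIntegral.intervalIntegral_pos_of_pos
      ((Real.continuous_exp.comp (hQd.continuous.div_const D)).intervalIntegrable 0 ρ)
      (fun x => Real.exp_pos _) hρ
  have hKne : K ≠ 0 := ne_of_gt hKpos
  have hKhatne : Khat ≠ 0 := ne_of_gt hKhatpos
  -- notation
  set e : ℝ → ℝ := fun y => Real.exp (-Q y / D) with he
  set E : ℝ → ℝ := fun y => Real.exp (Q y / D) with hE
  have hec : Continuous e := Real.continuous_exp.comp ((hQd.continuous.neg).div_const D)
  have hEc : Continuous E := Real.continuous_exp.comp (hQd.continuous.div_const D)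
  have heE : ∀ y, e y * E y = 1 := by
    intro y
    rw [he, hE, ← Real.exp_add, show -Q y / D + Q y / D = 0 by ring, Real.exp_zero]
  set g : ℝ → ℝ := fun z => 1 - (ρ / K) * e z with hg
  have hgc : Continuous g := continuous_const.sub (continuous_const.mul hec)
  set h : ℝ → ℝ := fun y => ∫ z in (0:ℝ)..y, g z with hh
  have hhd : ∀ y, HasDerivAt h (g y) y := by
    intro y
    exact intervalIntegral.integral_hasDerivAt_right (hgc.intervalIntegrable 0 y)
      hgc.aestronglyMeasurable.stronglyMeasurableAtFilter hgc.continuousAt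
  have hhc : Continuous h := by
    have : Differentiable ℝ h := fun y => (hhd y).differentiableAt
    exact this.continuous
  set c : ℝ := ρ / (D * Khat) with hc
  set φ : ℝ → ℝ := fun y => e y * deriv ξ y with hφ
  -- derivative of φ
  have hφd : ∀ y, HasDerivAt φ (c * g y) y := by
    intro y
    have h1 : HasDerivAt (fun t => -Q t / D) (-deriv Q y / D) y :=
      ((hQd y).hasDerivAt.neg).div_const D
    have h2 : HasDerivAt e (e y * (-deriv Q y / D)) y := h1.exp
    have h3 : HasDerivAt (deriv ξ) (deriv (deriv ξ) y) y := (hξ'd y).hasDerivAt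
    have h4 := h2.mul h3
    have key : e y * (-deriv Q y / D) * deriv ξ y + e y * deriv (deriv ξ) y = c * g y := by
      have h5 : e y * (-deriv Q y / D) * deriv ξ y + e y * deriv (deriv ξ) y
          = (e y / D) * (D * deriv (deriv ξ) y - deriv Q y * deriv ξ y) := by
        field_simp
        ring
      have hene : e y ≠ 0 := Real.exp_ne_zero _
      have hEy : Real.exp (Q y / D) = (e y)⁻¹ :=
        eq_inv_of_mul_eq_one_right (heE y : e y * Real.exp (Q y / D) = 1)
      rw [h5, hξeq y, hc, hg, hEy]
      simp only []
      field_simp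
    rw [key] at h4
    exact h4
  -- φ y = φ 0 + c * h y
  have hconst : ∀ y, φ y - c * h y = φ 0 := by
    intro y
    have hd : Differentiable ℝ (fun y => φ y - c * h y) := fun y =>
      ((hφd y).sub ((hhd y).const_mul c)).differentiableAt
    have hz : ∀ y, deriv (fun y => φ y - c * h y) y = 0 := by
      intro y
      have := ((hφd y).sub ((hhd y).const_mul c))
      exact this.deriv.trans (sub_self _)
    have := is_const_of_deriv_eq_zero hd hz y 0
    simpa [hh, hφ] using this
  have hkey : ∀ y, φ y = φ 0 + c * h y := by
    intro y; have := hconst y; linarith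
  -- ∫₀^ρ deriv ξ = 0
  have hint0 : (∫ y in (0:ℝ)..ρ, deriv ξ y) = 0 := by
    rw [intervalIntegral.integral_deriv_eq_sub (fun y _ => hξd y)
      (hξ'c.intervalIntegrable 0 ρ)]
    have := hξper 0
    rw [zero_add] at this
    rw [this]; ring
  set A : ℝ := ∫ y in (0:ℝ)..ρ, E y * h y with hA
  set B : ℝ := ∫ y in (0:ℝ)..ρ, h y with hB
  -- deriv ξ y = E y * φ y
  have hξ'eq : ∀ y, deriv ξ y = E y * (φ 0 + c * h y) := by
    intro y
    rw [← hkey y, hφ]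
    have := heE y
    calc deriv ξ y = (e y * E y) * deriv ξ y := by rw [this]; ring
    _ = E y * (e y * deriv ξ y) := by ring
  -- relation: φ 0 * Khat + c * A = 0
  have hrel : φ 0 * Khat + c * A = 0 := by
    have : (∫ y in (0:ℝ)..ρ, deriv ξ y)
        = (∫ y in (0:ℝ)..ρ, E y * φ 0) + ∫ y in (0:ℝ)..ρ, E y * (c * h y) := by
      rw [← intervalIntegral.integral_add (f := fun y => E y * φ 0) (g := fun y => E y * (c * h y))
        ((hEc.mul continuous_const).intervalIntegrable 0 ρ)
        ((hEc.mul (continuous_const.mul hhc)).intervalIntegrable 0 ρ)]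
      apply intervalIntegral.integral_congr
      intro y _
      rw [hξ'eq y]; ring
    rw [hint0] at this
    have h1 : (∫ y in (0:ℝ)..ρ, E y * φ 0) = Khat * φ 0 := by
      rw [intervalIntegral.integral_mul_const, hKhat]
    have h2 : (∫ y in (0:ℝ)..ρ, E y * (c * h y)) = c * A := by
      rw [hA, ← intervalIntegral.integral_const_mul]
      apply intervalIntegral.integral_congr
      intro y _; ring
    rw [h1, h2] at this
    linarith
  -- compute the LHS integral
  have hLHS : (∫ y in (0:ℝ)..ρ, deriv ξ y * K⁻¹ * e y) = K⁻¹ * (ρ * φ 0 + c * B) := by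
    have h1 : (∫ y in (0:ℝ)..ρ, deriv ξ y * K⁻¹ * e y)
        = K⁻¹ * ∫ y in (0:ℝ)..ρ, φ y := by
      rw [← intervalIntegral.integral_const_mul]
      apply intervalIntegral.integral_congr
      intro y _
      rw [hφ]; ring
    have h2 : (∫ y in (0:ℝ)..ρ, φ y) = ρ * φ 0 + c * B := by
      have : (∫ y in (0:ℝ)..ρ, φ y)
          = (∫ y in (0:ℝ)..ρ, φ 0) + ∫ y in (0:ℝ)..ρ, c * h y := by
        rw [← intervalIntegral.integral_add (f := fun _ => φ 0) (g := fun y => c * h y) (intervalIntegrable_const)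
          ((continuous_const.mul hhc).intervalIntegrable 0 ρ)]
        apply intervalIntegral.integral_congr
        intro y _
        exact hkey y
      rw [this, intervalIntegral.integral_const, intervalIntegral.integral_const_mul, ← hB]
      simp [smul_eq_mul]
    rw [h1, h2]
  -- compute the RHS integral
  have hRHS : (∫ y in (0:ℝ)..ρ, (1 - (ρ / Khat) * E y) * h y) = B - (ρ / Khat) * A := by
    have : (∫ y in (0:ℝ)..ρ, (1 - (ρ / Khat) * E y) * h y)
        = (∫ y in (0:ℝ)..ρ, h y) - ∫ y in (0:ℝ)..ρ, (ρ / Khat) * (E y * h y) := by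
      rw [← intervalIntegral.integral_sub (f := h) (g := fun y => ρ / Khat * (E y * h y)) (hhc.intervalIntegrable 0 ρ)
        ((continuous_const.mul (hEc.mul hhc)).intervalIntegrable 0 ρ)]
      apply intervalIntegral.integral_congr
      intro y _; ring
    rw [this, intervalIntegral.integral_const_mul, ← hA, ← hB]
  -- main identity
  have main : (∫ y in (0:ℝ)..ρ, deriv ξ y * K⁻¹ * e y)
      = (ρ / (D * K * Khat)) * ∫ y in (0:ℝ)..ρ, (1 - (ρ / Khat) * E y) * h y := by
    rw [hLHS, hRHS]
    have hφ0 : φ 0 = -(c * A) / Khat := by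
      field_simp
      linarith
    rw [hφ0, hc]
    field_simp
    ring
  refine ⟨main, ?_⟩
  intro V x
  rw [main, sq_abs]
  ring
end
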